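/- Let a₀, R₀ > 0 and define, for t ∈ [0, ∞), A(t) = √(a₀² R₀⁶ + 9t²), R(t) = R₀ √(1 + 6t(3t + A(t))/(a₀² R₀⁶)), and a(t) = (A(t) + t)/R(t)³. Then a(0) = a₀, R(0) = R₀, and for all t ≥ 0: a′(t) = −8/R(t)³ and R′(t) = 3R(t)/(a(t)R(t)³ − t). Moreover R is strictly increasing with R(t) → +∞ as t → ∞, a is strictly decreasing with a(t) → 0 as t → ∞, and a(t) > t/R(t)³ for all t ≥ 0. -/

import Mathlib

/-- Explicit solution of the ODE system describing the evolution
`u(t,x) = a(t) 1_{B_{R(t)}}(x) + (t/|x|³) 1_{ℝ²∖B_{R(t)}}(x)` of the fourth-order total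
variation flow in dimension `n = 2` emanating from `a₀ 1_{B_{R₀}}`. -/
theorem stmt_16 (a0 R0 : ℝ) (ha0 : 0 < a0) (hR0 : 0 < R0)
    (A R a : ℝ → ℝ)
    (hA : A = fun t => Real.sqrt (a0 ^ 2 * R0 ^ 6 + 9 * t ^ 2))
    (hR : R = fun t => R0 * Real.sqrt (1 + 6 * t * (3 * t + A t) / (a0 ^ 2 * R0 ^ 6)))
    (ha : a = fun t => (A t + t) / R t ^ 3) :
    a 0 = a0 ∧ R 0 = R0 ∧
    (∀ t : ℝ, 0 ≤ t →
      HasDerivAt a (-8 / R t ^ 3) t ∧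
      HasDerivAt R (3 * R t / (a t * R t ^ 3 - t)) t) ∧
    StrictMonoOn R (Set.Ici 0) ∧ Filter.Tendsto R Filter.atTop Filter.atTop ∧
    StrictAntiOn a (Set.Ici 0) ∧ Filter.Tendsto a Filter.atTop (nhds 0) ∧
    ∀ t : ℝ, 0 ≤ t → a t > t / R t ^ 3 := by
  have hCpos : (0:ℝ) < a0 ^ 2 * R0 ^ 6 := by positivity
  have hpos : ∀ t : ℝ, (0:ℝ) < a0 ^ 2 * R0 ^ 6 + 9 * t ^ 2 := fun t => by positivity
  have hApos : ∀ t, 0 < A t := fun t => by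
    rw [hA]; exact Real.sqrt_pos.mpr (hpos t)
  have hAsq : ∀ t, A t ^ 2 = a0 ^ 2 * R0 ^ 6 + 9 * t ^ 2 := fun t => by
    rw [hA]; exact Real.sq_sqrt (hpos t).le
  have hA3t : ∀ t, 0 < A t + 3 * t := by
    intro t
    have h1 : Real.sqrt (9 * t ^ 2) < A t := by
      rw [hA]; exact Real.sqrt_lt_sqrt (by positivity) (by linarith [hCpos])
    have h2 : Real.sqrt (9 * t ^ 2) = |3 * t| := by
      rw [show (9:ℝ) * t ^ 2 = (3 * t) ^ 2 by ring, Real.sqrt_sq_eq_abs]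
    have := neg_abs_le (3 * t)
    nlinarith [h1, h2]
  have hRf : ∀ t, R t = (A t + 3 * t) / (a0 * R0 ^ 2) := by
    intro t
    have h1 : 1 + 6 * t * (3 * t + A t) / (a0 ^ 2 * R0 ^ 6)
        = ((A t + 3 * t) / (a0 * R0 ^ 3)) ^ 2 := by
      field_simp
      linear_combination (-1) * hAsq t
    rw [hR]
    simp only
    rw [h1, Real.sqrt_sq (div_pos (hA3t t) (by positivity)).le]
    field_simp
  have hRpos : ∀ t, 0 < R t := fun t => by
    rw [hRf t]; exact div_pos (hA3t t) (by positivity)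
  have hA0 : A 0 = a0 * R0 ^ 3 := by
    rw [hA]
    simp only
    rw [show a0 ^ 2 * R0 ^ 6 + 9 * (0:ℝ) ^ 2 = (a0 * R0 ^ 3) ^ 2 by ring,
      Real.sqrt_sq (by positivity)]
  have hR0' : R 0 = R0 := by
    rw [hRf 0, hA0]; field_simp; ring
  have ha0' : a 0 = a0 := by
    rw [ha]
    simp only
    rw [hA0, hR0']
    field_simp
    ring
  -- derivatives
  have hA' : ∀ t, HasDerivAt A (9 * t / A t) t := by
    intro t
    have h1 : HasDerivAt (fun t : ℝ => a0 ^ 2 * R0 ^ 6 + 9 * t ^ 2) (18 * t) t := by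
      have := ((hasDerivAt_pow 2 t).const_mul (9:ℝ)).const_add (a0 ^ 2 * R0 ^ 6)
      simpa using this.congr_deriv (by ring)
    have h2 : HasDerivAt (fun t => Real.sqrt (a0 ^ 2 * R0 ^ 6 + 9 * t ^ 2)) _ t :=
      (Real.hasDerivAt_sqrt (hpos t).ne').comp t h1
    have h3 : (0:ℝ) < Real.sqrt (a0 ^ 2 * R0 ^ 6 + 9 * t ^ 2) := Real.sqrt_pos.mpr (hpos t)
    rw [hA]
    convert h2 using 1
    field_simp
    ring
  have hR' : ∀ t, HasDerivAt R (3 * R t / A t) t := by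
    intro t
    have h1 : HasDerivAt (fun t => (A t + 3 * t) / (a0 * R0 ^ 2))
        ((9 * t / A t + 3) / (a0 * R0 ^ 2)) t := by
      have h2 : HasDerivAt (fun t : ℝ => 3 * t) 3 t := by
        simpa using (hasDerivAt_id t).const_mul (3:ℝ)
      exact ((hA' t).add h2).div_const _
    have h3 : R = fun t => (A t + 3 * t) / (a0 * R0 ^ 2) := funext hRf
    rw [h3]
    convert h1 using 1
    simp only
    have := (hApos t).ne'
    field_simp
    ring
  have ha' : ∀ t, HasDerivAt a (-8 / R t ^ 3) t := by
    intro t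
    have hnum : HasDerivAt (fun t => A t + t) (9 * t / A t + 1) t :=
      (hA' t).add (hasDerivAt_id t)
    have hden : HasDerivAt (fun t => R t ^ 3) (3 * R t ^ 2 * (3 * R t / A t)) t := by
      simpa using (hR' t).fun_pow 3
    have h1 : HasDerivAt (fun t => (A t + t) / R t ^ 3) _ t := hnum.fun_div hden (pow_ne_zero 3 (hRpos t).ne')
    rw [ha]
    convert h1 using 1
    have hAne := (hApos t).ne'
    have hRne := (hRpos t).ne'
    field_simp
    ring
  have haR : ∀ t, a t * R t ^ 3 = A t + t := by
    intro t
    rw [ha]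
    have := (hRpos t).ne'
    field_simp
  -- monotonicity of R
  have hRmono : StrictMono R := by
    apply strictMono_of_deriv_pos
    intro t
    rw [(hR' t).deriv]
    exact div_pos (by linarith [hRpos t]) (hApos t)
  -- a strictly decreasing
  have haanti : StrictAnti a := by
    apply strictAnti_of_deriv_neg
    intro t
    rw [(ha' t).deriv]
    exact div_neg_of_neg_of_pos (by norm_num) (pow_pos (hRpos t) 3)
  -- R tends to atTop
  have hRtop : Filter.Tendsto R Filter.atTop Filter.atTop := by
    have hlin : Filter.Tendsto (fun t : ℝ => 6 * t / (a0 * R0 ^ 2))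
        Filter.atTop Filter.atTop :=
      Filter.Tendsto.atTop_div_const (by positivity)
        (Filter.tendsto_id.const_mul_atTop (by norm_num : (0:ℝ) < 6))
    apply Filter.tendsto_atTop_mono' Filter.atTop ?_ hlin
    filter_upwards [Filter.eventually_ge_atTop (0:ℝ)] with t ht
    rw [hRf t]
    have h1 : 3 * t ≤ A t := by
      have h2 : Real.sqrt (9 * t ^ 2) ≤ A t := by
        rw [hA]; exact Real.sqrt_le_sqrt (by linarith [hCpos.le])
      have h3 : Real.sqrt (9 * t ^ 2) = |3 * t| := by
        rw [show (9:ℝ) * t ^ 2 = (3 * t) ^ 2 by ring, Real.sqrt_sq_eq_abs]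
      calc 3 * t ≤ |3 * t| := le_abs_self _
      _ ≤ A t := by rw [← h3]; exact h2
    gcongr
    linarith
  -- a tends to 0
  have hatop : Filter.Tendsto a Filter.atTop (nhds 0) := by
    have hbound : Filter.Tendsto (fun t => a0 * R0 ^ 2 / R t ^ 2) Filter.atTop (nhds 0) := by
      apply Filter.Tendsto.div_atTop tendsto_const_nhds
      exact (Filter.tendsto_pow_atTop (two_ne_zero)).comp hRtop
    apply tendsto_of_tendsto_of_tendsto_of_le_of_le' tendsto_const_nhds hbound
    · filter_upwards [Filter.eventually_ge_atTop (0:ℝ)] with t ht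
      rw [ha]
      simp only
      exact div_nonneg (by linarith [hApos t]) (pow_pos (hRpos t) 3).le
    · filter_upwards [Filter.eventually_ge_atTop (0:ℝ)] with t ht
      rw [ha]
      simp only
      have h1 : A t + t ≤ a0 * R0 ^ 2 * R t := by
        rw [hRf t]
        have : a0 * R0 ^ 2 * ((A t + 3 * t) / (a0 * R0 ^ 2)) = A t + 3 * t := by
          field_simp
        rw [this]; linarith
      calc (A t + t) / R t ^ 3 ≤ (a0 * R0 ^ 2 * R t) / R t ^ 3 :=
            (div_le_div_iff_of_pos_right (pow_pos (hRpos t) 3)).mpr h1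
        _ = a0 * R0 ^ 2 / R t ^ 2 := by
            have := (hRpos t).ne'
            field_simp
  refine ⟨ha0', hR0', ?_, hRmono.strictMonoOn _, hRtop, haanti.strictAntiOn _, hatop, ?_⟩
  · intro t ht
    refine ⟨ha' t, ?_⟩
    have h1 : a t * R t ^ 3 - t = A t := by rw [haR t]; ring
    rw [h1]
    exact hR' t
  · intro t ht
    rw [ha]
    simp only
    exact (div_lt_div_iff_of_pos_right (pow_pos (hRpos t) 3)).mpr (by linarith [hApos t])
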